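/- Let n ≥ 3 and p be integers with 1 ≤ p ≤ n−1, let c̃ > 0 and 0 ≤ c < c̃ be real numbers, and let A > 0. Define Γ := ((n²+1)/(n+1))·(c̃ − c) + p·c, L(t) := (c̃ − c)/(n+1) + t⁻²·((n²+1)/(n²−1)·c̃ + c/(n+1)), and S(t) := −t²·A² + A² − (n−p)·c + n·c̃ + t⁻²·(n−p)·c. Then for every real t with t ≥ 1 and t ≥ √Γ/A, and every real λ with λ ≥ L(t), one has (n−1)·λ ≥ S(t), i.e. λ ≥ S(t)/(n−1). -/
import Mathlib


/-- The analytic skeleton of Theorem 4.1 (stability): with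
`Γ = ((n²+1)/(n+1))·(c̃-c) + p·c`,
`L(t) = (c̃-c)/(n+1) + t⁻²·((n²+1)/(n²-1)·c̃ + c/(n+1))` and
`S(t) = -t²·A² + A² - (n-p)·c + n·c̃ + t⁻²·(n-p)·c`, for every
`t ≥ max{1, √Γ/A}` and every `λ ≥ L(t)` one has `(n-1)·λ ≥ S(t)`,
i.e. `λ ≥ S(t)/(n-1)`. -/
theorem stmt_9 (n p : ℕ) (hn : 3 ≤ n) (hp1 : 1 ≤ p) (hp2 : p ≤ n - 1)
    (ct c A : ℝ) (hct : 0 < ct) (hc0 : 0 ≤ c) (hcct : c < ct) (hA : 0 < A)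
    (t : ℝ) (ht1 : 1 ≤ t)
    (ht2 : Real.sqrt (((n : ℝ) ^ 2 + 1) / ((n : ℝ) + 1) * (ct - c) + (p : ℝ) * c) / A ≤ t)
    (lam : ℝ)
    (hlam : (ct - c) / ((n : ℝ) + 1)
        + t⁻¹ ^ 2 * (((n : ℝ) ^ 2 + 1) / ((n : ℝ) ^ 2 - 1) * ct + c / ((n : ℝ) + 1)) ≤ lam) :
    (-(t ^ 2) * A ^ 2 + A ^ 2 - ((n : ℝ) - (p : ℝ)) * c + (n : ℝ) * ct
        + t⁻¹ ^ 2 * ((n : ℝ) - (p : ℝ)) * c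
      ≤ ((n : ℝ) - 1) * lam)
    ∧ (-(t ^ 2) * A ^ 2 + A ^ 2 - ((n : ℝ) - (p : ℝ)) * c + (n : ℝ) * ct
        + t⁻¹ ^ 2 * ((n : ℝ) - (p : ℝ)) * c) / ((n : ℝ) - 1)
      ≤ lam := by
  set N : ℝ := (n : ℝ) with hNdef
  have hN : (3 : ℝ) ≤ N := by rw [hNdef]; exact_mod_cast hn
  have hN1 : (0 : ℝ) < N + 1 := by linarith
  have hN2 : (0 : ℝ) < N ^ 2 - 1 := by nlinarith
  have hNm1 : (0 : ℝ) < N - 1 := by linarith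
  have ht0 : (0 : ℝ) < t := by linarith
  set Γ : ℝ := (N ^ 2 + 1) / (N + 1) * (ct - c) + (p : ℝ) * c with hΓdef
  have hΓ0 : 0 ≤ Γ := by
    rw [hΓdef]
    have h1 : 0 ≤ (N ^ 2 + 1) / (N + 1) * (ct - c) :=
      mul_nonneg (by positivity) (by linarith)
    have h2 : 0 ≤ (p : ℝ) * c := by positivity
    linarith
  have hsqrt : Real.sqrt Γ ≤ t * A := by
    have := (div_le_iff₀ hA).mp ht2
    linarith
  have hsq : Γ ≤ t ^ 2 * A ^ 2 := by
    nlinarith [Real.sq_sqrt hΓ0, Real.sqrt_nonneg Γ]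
  have hinv : t⁻¹ ^ 2 * t ^ 2 = 1 := by
    field_simp
  have hu1 : t⁻¹ ^ 2 ≤ 1 := by
    have h1 : t⁻¹ ≤ 1 := by
      rw [inv_le_one_iff₀]; right; exact ht1
    have h0 : 0 ≤ t⁻¹ := by positivity
    nlinarith
  have hkey : (1 - t⁻¹ ^ 2) * Γ ≤ (t ^ 2 - 1) * A ^ 2 := by
    have h1 : (1 - t⁻¹ ^ 2) * Γ ≤ (1 - t⁻¹ ^ 2) * (t ^ 2 * A ^ 2) :=
      mul_le_mul_of_nonneg_left hsq (by linarith)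
    have h2 : (1 - t⁻¹ ^ 2) * (t ^ 2 * A ^ 2) = (t ^ 2 - 1) * A ^ 2 := by
      rw [show (1 - t⁻¹ ^ 2) * (t ^ 2 * A ^ 2)
          = t ^ 2 * A ^ 2 - t⁻¹ ^ 2 * t ^ 2 * A ^ 2 from by ring, hinv]
      ring
    linarith
  have hid : (-(N - (p : ℝ)) * c + N * ct + t⁻¹ ^ 2 * (N - (p : ℝ)) * c)
      - (1 - t⁻¹ ^ 2) * Γ
      = (N - 1) * ((ct - c) / (N + 1)
        + t⁻¹ ^ 2 * ((N ^ 2 + 1) / (N ^ 2 - 1) * ct + c / (N + 1))) := by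
    rw [hΓdef]
    have hN1' : N + 1 ≠ 0 := ne_of_gt hN1
    have hN2' : N ^ 2 - 1 ≠ 0 := ne_of_gt hN2
    field_simp
    ring
  have hmain : -(t ^ 2) * A ^ 2 + A ^ 2 - (N - (p : ℝ)) * c + N * ct
      + t⁻¹ ^ 2 * (N - (p : ℝ)) * c ≤ (N - 1) * lam := by
    have hL : (N - 1) * ((ct - c) / (N + 1)
        + t⁻¹ ^ 2 * ((N ^ 2 + 1) / (N ^ 2 - 1) * ct + c / (N + 1))) ≤ (N - 1) * lam :=
      mul_le_mul_of_nonneg_left hlam (by linarith)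
    linarith [hkey, hid.le, hid.ge]
  refine ⟨hmain, ?_⟩
  rw [div_le_iff₀ hNm1]
  linarith [hmain]
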